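/- Let Y_1, ..., Y_n be i.i.d. square-integrable real random variables and fix 1 ≤ s < n. For a uniformly random size-s subset A of {1,...,n} (independent of the data), let μ*(A) = (1/s) Σ_{i ∈ A} Y_i and N_i(A) = 1{i ∈ A}, and define the random variable V̂_IJ = ((n−1)/n)·(n/(n−s))² · Σ_{i=1}^n Cov_A(μ*(A), N_i(A))², where Cov_A denotes covariance over the random subset A with the data held fixed. Then E[V̂_IJ] = Var((1/n) Σ_{i=1}^n Y_i) = Var(Y_1)/n; that is, V̂_IJ is exactly unbiased for the variance of the sample mean. -/

import Mathlib

open MeasureTheory ProbabilityTheory Finset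

private lemma card_filter_mem' {α : Type*} [DecidableEq α] (u : Finset α) (i : α) (hi : i ∈ u)
    (k : ℕ) :
    ((u.powersetCard (k+1)).filter (fun A => i ∈ A)).card = (u.erase i).card.choose k := by
  rw [← Finset.card_powersetCard]
  apply Finset.card_bij (fun A _ => A.erase i)
  · intro A hA
    simp only [Finset.mem_filter, Finset.mem_powersetCard] at hA
    rw [Finset.mem_powersetCard]
    exact ⟨Finset.erase_subset_erase _ hA.1.1,
      by rw [Finset.card_erase_of_mem hA.2, hA.1.2]; omega⟩
  · intro A hA B hB h
    simp only [Finset.mem_filter] at hA hB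
    rw [← Finset.insert_erase hA.2, ← Finset.insert_erase hB.2, h]
  · intro B hB
    rw [Finset.mem_powersetCard] at hB
    have hiB : i ∉ B := fun h => (Finset.notMem_erase i u) (hB.1 h)
    refine ⟨insert i B, ?_, ?_⟩
    · simp only [Finset.mem_filter, Finset.mem_powersetCard]
      refine ⟨⟨Finset.insert_subset hi (hB.1.trans (Finset.erase_subset _ _)), ?_⟩,
        Finset.mem_insert_self i B⟩
      rw [Finset.card_insert_of_notMem hiB, hB.2]
    · rw [Finset.erase_insert hiB]

private lemma card_filter_mem_pair' {α : Type*} [DecidableEq α] (u : Finset α) (i j : α)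
    (hi : i ∈ u) (hj : j ∈ u) (hij : i ≠ j) (k : ℕ) :
    ((u.powersetCard (k+2)).filter (fun A => i ∈ A ∧ j ∈ A)).card
      = ((u.erase i).erase j).card.choose k := by
  have h1 : ((u.powersetCard (k+2)).filter (fun A => i ∈ A ∧ j ∈ A)).card
      = (((u.erase i).powersetCard (k+1)).filter (fun A => j ∈ A)).card := by
    apply Finset.card_bij (fun A _ => A.erase i)
    · intro A hA
      simp only [Finset.mem_filter, Finset.mem_powersetCard] at hA ⊢
      exact ⟨⟨Finset.erase_subset_erase _ hA.1.1,
        by rw [Finset.card_erase_of_mem hA.2.1, hA.1.2]; omega⟩,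
        Finset.mem_erase.2 ⟨hij.symm, hA.2.2⟩⟩
    · intro A hA B hB h
      simp only [Finset.mem_filter] at hA hB
      rw [← Finset.insert_erase hA.2.1, ← Finset.insert_erase hB.2.1, h]
    · intro B hB
      simp only [Finset.mem_filter, Finset.mem_powersetCard] at hB
      have hiB : i ∉ B := fun h => (Finset.notMem_erase i u) (hB.1.1 h)
      refine ⟨insert i B, ?_, Finset.erase_insert hiB⟩
      simp only [Finset.mem_filter, Finset.mem_powersetCard]
      refine ⟨⟨Finset.insert_subset hi (hB.1.1.trans (Finset.erase_subset _ _)), ?_⟩,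
        Finset.mem_insert_self i B, Finset.mem_insert_of_mem hB.2⟩
      rw [Finset.card_insert_of_notMem hiB, hB.1.2]
  rw [h1, card_filter_mem' (u.erase i) j (Finset.mem_erase.2 ⟨hij.symm, hj⟩) k]

private lemma single_sum (n s : ℕ) (hs : 1 ≤ s) (i : Fin n) :
    (∑ A ∈ powersetCard s (univ : Finset (Fin n)), (if i ∈ A then (1:ℝ) else 0))
      = ((n-1).choose (s-1) : ℝ) := by
  rw [Finset.sum_boole]
  norm_cast
  obtain ⟨k, rfl⟩ : ∃ k, s = k + 1 := ⟨s-1, by omega⟩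
  rw [card_filter_mem' univ i (mem_univ i) k,
    Finset.card_erase_of_mem (mem_univ i), Finset.card_univ, Fintype.card_fin,
    Nat.add_sub_cancel]

private lemma pair_sum (n s : ℕ) (hs : 1 ≤ s) (hsn : s < n) {i j : Fin n} (hij : i ≠ j) :
    ((n:ℝ) - 1) * (∑ A ∈ powersetCard s (univ : Finset (Fin n)),
        (if j ∈ A then (1:ℝ) else 0) * (if i ∈ A then (1:ℝ) else 0))
      = ((s:ℝ) - 1) * ((n-1).choose (s-1) : ℝ) := by
  have hmul : ∀ A : Finset (Fin n),
      (if j ∈ A then (1:ℝ) else 0) * (if i ∈ A then (1:ℝ) else 0)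
        = if j ∈ A ∧ i ∈ A then (1:ℝ) else 0 := by
    intro A; by_cases h1 : j ∈ A <;> by_cases h2 : i ∈ A <;> simp [h1, h2]
  simp only [hmul]
  rw [Finset.sum_boole]
  rcases Nat.lt_or_ge s 2 with h2 | h2
  · have hs1 : s = 1 := by omega
    subst hs1
    have hempty : (powersetCard 1 (univ : Finset (Fin n))).filter
        (fun A => j ∈ A ∧ i ∈ A) = ∅ := by
      rw [Finset.filter_eq_empty_iff]
      intro A hA
      rw [Finset.mem_powersetCard] at hA
      rintro ⟨hjA, hiA⟩
      have : 1 < A.card := Finset.one_lt_card.2 ⟨j, hjA, i, hiA, hij.symm⟩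
      omega
    simp [hempty]
  · obtain ⟨k, rfl⟩ : ∃ k, s = k + 2 := ⟨s - 2, by omega⟩
    rw [card_filter_mem_pair' univ j i (mem_univ j) (mem_univ i) hij.symm k]
    have hcard : ((univ.erase j).erase i).card = n - 2 := by
      rw [Finset.card_erase_of_mem (Finset.mem_erase.2 ⟨hij, mem_univ i⟩),
        Finset.card_erase_of_mem (mem_univ j), Finset.card_univ, Fintype.card_fin]
      omega
    rw [hcard]
    have hnat : (n - 1) * ((n-2).choose k) = ((n-1).choose (k+1)) * (k+1) := by
      have h := Nat.add_one_mul_choose_eq (n-2) k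
      have h2n : n - 2 + 1 = n - 1 := by omega
      rwa [h2n] at h
    have hgoal : (k + 2 - 1 : ℕ) = k + 1 := by omega
    rw [hgoal]
    have hcast := congrArg (Nat.cast (R := ℝ)) hnat
    push_cast [Nat.cast_sub (show 1 ≤ n by omega)] at hcast
    push_cast
    linear_combination hcast

private lemma choose_rel (n s : ℕ) (hs : 1 ≤ s) (hsn : s < n) :
    (n:ℝ) * ((n-1).choose (s-1) : ℝ) = ((n.choose s : ℝ)) * (s:ℝ) := by
  have h := Nat.add_one_mul_choose_eq (n-1) (s-1)
  have h1 : n - 1 + 1 = n := by omega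
  have h2 : s - 1 + 1 = s := by omega
  rw [h1, h2] at h
  exact_mod_cast congrArg (Nat.cast : ℕ → ℝ) h

private lemma covA_closed (n s : ℕ) (hs : 1 ≤ s) (hsn : s < n) (y : Fin n → ℝ) (i : Fin n) :
    (∑ A ∈ powersetCard s (univ : Finset (Fin n)),
        ((∑ j ∈ A, y j) / s) * (if i ∈ A then (1 : ℝ) else 0)) / (n.choose s : ℝ)
      - ((∑ A ∈ powersetCard s (univ : Finset (Fin n)), (∑ j ∈ A, y j) / s)
          / (n.choose s : ℝ))
        * ((∑ A ∈ powersetCard s (univ : Finset (Fin n)),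
            (if i ∈ A then (1 : ℝ) else 0)) / (n.choose s : ℝ))
    = ((n:ℝ) - s) / ((n:ℝ) * ((n:ℝ) - 1)) * (y i - (∑ j, y j) / n) := by
  have hn0 : (n:ℝ) ≠ 0 := Nat.cast_ne_zero.2 (by omega)
  have hs0 : (s:ℝ) ≠ 0 := Nat.cast_ne_zero.2 (by omega)
  have hn1 : (n:ℝ) - 1 ≠ 0 := by
    have h2 : (2:ℝ) ≤ (n:ℝ) := by exact_mod_cast (show 2 ≤ n by omega)
    intro h; linarith
  have hC0 : ((n.choose s : ℕ) : ℝ) ≠ 0 :=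
    Nat.cast_ne_zero.2 (Nat.choose_pos hsn.le).ne'
  set S : ℝ := ∑ j, y j with hSdef
  set N1 : ℝ := (((n-1).choose (s-1) : ℕ) : ℝ) with hN1def
  set C : ℝ := ((n.choose s : ℕ) : ℝ) with hCdef
  have hinner : ∀ A : Finset (Fin n),
      (∑ j ∈ A, y j) = ∑ j, y j * (if j ∈ A then (1:ℝ) else 0) := by
    intro A
    simp only [mul_ite, mul_one, mul_zero]
    rw [Finset.sum_ite_mem, Finset.univ_inter]
  have hsum : ∑ A ∈ powersetCard s (univ : Finset (Fin n)), (∑ j ∈ A, y j) = N1 * S := by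
    simp only [hinner]
    rw [Finset.sum_comm]
    have h1 : ∀ j : Fin n, ∑ A ∈ powersetCard s (univ : Finset (Fin n)),
        y j * (if j ∈ A then (1:ℝ) else 0) = y j * N1 := fun j => by
      rw [← Finset.mul_sum, single_sum n s hs j]
    rw [Finset.sum_congr rfl (fun j _ => h1 j), ← Finset.sum_mul]
    ring
  set T : ℝ := ∑ A ∈ powersetCard s (univ : Finset (Fin n)),
      (∑ j ∈ A, y j) * (if i ∈ A then (1:ℝ) else 0) with hTdef
  have hTeq : T = ∑ j, y j * (∑ A ∈ powersetCard s (univ : Finset (Fin n)),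
      (if j ∈ A then (1:ℝ) else 0) * (if i ∈ A then (1:ℝ) else 0)) := by
    rw [hTdef]
    calc ∑ A ∈ powersetCard s (univ : Finset (Fin n)),
          (∑ j ∈ A, y j) * (if i ∈ A then (1:ℝ) else 0)
        = ∑ A ∈ powersetCard s (univ : Finset (Fin n)), ∑ j,
            y j * ((if j ∈ A then (1:ℝ) else 0) * (if i ∈ A then (1:ℝ) else 0)) := by
          refine Finset.sum_congr rfl fun A _ => ?_
          rw [hinner A, Finset.sum_mul]
          exact Finset.sum_congr rfl fun j _ => by ring
      _ = _ := by
          rw [Finset.sum_comm]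
          exact Finset.sum_congr rfl fun j _ => (Finset.mul_sum _ _ _).symm
  have hii : (∑ A ∈ powersetCard s (univ : Finset (Fin n)),
      (if i ∈ A then (1:ℝ) else 0) * (if i ∈ A then (1:ℝ) else 0)) = N1 := by
    have h1 : ∀ A : Finset (Fin n),
        (if i ∈ A then (1:ℝ) else 0) * (if i ∈ A then (1:ℝ) else 0)
          = (if i ∈ A then (1:ℝ) else 0) := fun A => by by_cases h : i ∈ A <;> simp [h]
    rw [Finset.sum_congr rfl fun A _ => h1 A, single_sum n s hs i]
  have herase : ∀ j ∈ (univ : Finset (Fin n)).erase i,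
      ((n:ℝ)-1) * (y j * (∑ A ∈ powersetCard s (univ : Finset (Fin n)),
        (if j ∈ A then (1:ℝ) else 0) * (if i ∈ A then (1:ℝ) else 0)))
      = y j * (((s:ℝ)-1) * N1) := by
    intro j hj
    have hji : i ≠ j := fun h => (Finset.mem_erase.1 hj).1 h.symm
    calc ((n:ℝ)-1) * (y j * (∑ A ∈ powersetCard s (univ : Finset (Fin n)),
          (if j ∈ A then (1:ℝ) else 0) * (if i ∈ A then (1:ℝ) else 0)))
        = y j * (((n:ℝ)-1) * (∑ A ∈ powersetCard s (univ : Finset (Fin n)),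
          (if j ∈ A then (1:ℝ) else 0) * (if i ∈ A then (1:ℝ) else 0))) := by ring
      _ = y j * (((s:ℝ)-1) * N1) := by rw [pair_sum n s hs hsn hji]
  have hT : ((n:ℝ)-1) * T
      = ((n:ℝ)-1) * (y i * N1) + ((s:ℝ)-1) * N1 * (S - y i) := by
    calc ((n:ℝ)-1) * T
        = ∑ j, ((n:ℝ)-1) * (y j * (∑ A ∈ powersetCard s (univ : Finset (Fin n)),
            (if j ∈ A then (1:ℝ) else 0) * (if i ∈ A then (1:ℝ) else 0))) := by
          rw [hTeq, Finset.mul_sum]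
      _ = (∑ j ∈ (univ : Finset (Fin n)).erase i,
            ((n:ℝ)-1) * (y j * (∑ A ∈ powersetCard s (univ : Finset (Fin n)),
            (if j ∈ A then (1:ℝ) else 0) * (if i ∈ A then (1:ℝ) else 0))))
          + ((n:ℝ)-1) * (y i * (∑ A ∈ powersetCard s (univ : Finset (Fin n)),
            (if i ∈ A then (1:ℝ) else 0) * (if i ∈ A then (1:ℝ) else 0))) :=
          (Finset.sum_erase_add _ _ (mem_univ i)).symm
      _ = (∑ j ∈ (univ : Finset (Fin n)).erase i, y j * (((s:ℝ)-1) * N1))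
          + ((n:ℝ)-1) * (y i * N1) := by
          rw [Finset.sum_congr rfl herase, hii]
      _ = ((n:ℝ)-1) * (y i * N1) + ((s:ℝ)-1) * N1 * (S - y i) := by
          rw [← Finset.sum_mul, Finset.sum_erase_eq_sub (mem_univ i), ← hSdef]
          ring
  have hN1C : (n:ℝ) * N1 = C * (s:ℝ) := choose_rel n s hs hsn
  have e1 : ∑ A ∈ powersetCard s (univ : Finset (Fin n)),
      ((∑ j ∈ A, y j) / s) * (if i ∈ A then (1:ℝ) else 0) = T / s := by
    rw [hTdef]
    simp only [div_mul_eq_mul_div]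
    rw [Finset.sum_div]
  have e2 : ∑ A ∈ powersetCard s (univ : Finset (Fin n)),
      (∑ j ∈ A, y j) / s = (N1 * S) / s := by rw [← Finset.sum_div, hsum]
  have e3 : ∑ A ∈ powersetCard s (univ : Finset (Fin n)),
      (if i ∈ A then (1:ℝ) else 0) = N1 := single_sum n s hs i
  rw [e1, e2, e3]
  have hN1v : N1 = C * (s:ℝ) / (n:ℝ) := by
    rw [eq_div_iff hn0]; linear_combination hN1C
  have hTv : T = (((n:ℝ)-1) * (y i * N1) + ((s:ℝ)-1) * N1 * (S - y i)) / ((n:ℝ)-1) := by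
    rw [eq_div_iff hn1]; linear_combination hT
  rw [hN1v] at hTv
  rw [hTv, hN1v]
  field_simp
  ring

open MeasureTheory ProbabilityTheory


/-- For i.i.d. square-integrable `Y_1, ..., Y_n` and trivial trees
(subsample means over uniformly random size-`s` subsets, `s < n`), the infinitesimal
jackknife variance estimate with finite-sample correction is exactly unbiased for the
variance of the sample mean: `E[V̂_IJ] = Var( (1/n) Σ Y_i ) = Var(Y_1)/n`. -/
theorem infinitesimal_jackknife_unbiased_trivial_trees
    {Ω : Type*} [MeasurableSpace Ω]
    (μ : Measure Ω) [IsProbabilityMeasure μ]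
    (n s : ℕ) (hs : 1 ≤ s) (hsn : s < n)
    (Y : Fin n → Ω → ℝ) (hmeas : ∀ i, Measurable (Y i))
    (hindep : iIndepFun Y μ)
    (hident : ∀ i j, IdentDistrib (Y i) (Y j) μ μ)
    (hL2 : ∀ i, MemLp (Y i) 2 μ)
    (CovA : Ω → Fin n → ℝ)
    (hCovA : CovA = fun ω i =>
      (∑ A ∈ powersetCard s (univ : Finset (Fin n)),
          ((∑ j ∈ A, Y j ω) / s) * (if i ∈ A then (1 : ℝ) else 0)) / (n.choose s : ℝ)
        - ((∑ A ∈ powersetCard s (univ : Finset (Fin n)), (∑ j ∈ A, Y j ω) / s)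
            / (n.choose s : ℝ))
          * ((∑ A ∈ powersetCard s (univ : Finset (Fin n)),
              (if i ∈ A then (1 : ℝ) else 0)) / (n.choose s : ℝ)))
    (VIJ : Ω → ℝ)
    (hVIJ : VIJ = fun ω =>
      ((n : ℝ) - 1) / n * ((n : ℝ) / ((n : ℝ) - s)) ^ 2 * ∑ i, (CovA ω i) ^ 2) :
    (∫ ω, VIJ ω ∂μ = variance (fun ω => (∑ i, Y i ω) / n) μ) ∧
    variance (fun ω => (∑ i, Y i ω) / n) μ
      = variance (Y ⟨0, by omega⟩) μ / n := by
  classical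
  set z : Fin n := ⟨0, by omega⟩ with hz
  set V : ℝ := variance (Y z) μ with hV
  set m : ℝ := ∫ ω, Y z ω ∂μ with hm
  have hn0 : (n:ℝ) ≠ 0 := Nat.cast_ne_zero.2 (by omega)
  have hn1 : (n:ℝ) - 1 ≠ 0 := by
    have h2 : (2:ℝ) ≤ (n:ℝ) := by exact_mod_cast (show 2 ≤ n by omega)
    intro h; linarith
  have hns : (n:ℝ) - (s:ℝ) ≠ 0 := by
    have : (s:ℝ) < (n:ℝ) := by exact_mod_cast hsn
    intro h; linarith
  -- Part 2
  have hsumL2 : MemLp (∑ i, Y i) 2 μ := memLp_finset_sum' _ (fun i _ => hL2 i)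
  have hvarsum : variance (∑ i, Y i) μ = (n:ℝ) * V := by
    rw [IndepFun.variance_sum (fun i _ => hL2 i)
      (fun i _ j _ hij => hindep.indepFun hij)]
    rw [Finset.sum_congr rfl (fun i _ => (hident i z).variance_eq)]
    simp [Finset.card_univ, mul_comm, hV]
  have part2 : variance (fun ω => (∑ i, Y i ω) / n) μ = V / n := by
    have hfun : (fun ω => (∑ i, Y i ω) / (n:ℝ)) = ((n:ℝ)⁻¹) • (∑ i, Y i) := by
      funext ω
      simp [Finset.sum_apply, div_eq_inv_mul]
    rw [hfun, variance_smul, hvarsum]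
    field_simp
  refine ⟨?_, part2⟩
  rw [part2]
  -- pointwise formula for VIJ
  have hkey : VIJ = fun ω => (1 / ((n:ℝ) * ((n:ℝ) - 1)))
      * ((∑ i, (Y i ω)^2) - (∑ i, Y i ω)^2 / n) := by
    funext ω
    rw [hVIJ, hCovA]
    have hc : ∀ i : Fin n,
        ((∑ A ∈ powersetCard s (univ : Finset (Fin n)),
            ((∑ j ∈ A, Y j ω) / s) * (if i ∈ A then (1 : ℝ) else 0)) / (n.choose s : ℝ)
          - ((∑ A ∈ powersetCard s (univ : Finset (Fin n)), (∑ j ∈ A, Y j ω) / s)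
              / (n.choose s : ℝ))
            * ((∑ A ∈ powersetCard s (univ : Finset (Fin n)),
                (if i ∈ A then (1 : ℝ) else 0)) / (n.choose s : ℝ)))
        = ((n:ℝ) - s) / ((n:ℝ) * ((n:ℝ) - 1)) * (Y i ω - (∑ j, Y j ω) / n) :=
      fun i => covA_closed n s hs hsn (fun j => Y j ω) i
    simp only
    rw [Finset.sum_congr rfl (fun i _ => by rw [hc i])]
    have expand : ∑ i, (((n:ℝ) - s) / ((n:ℝ) * ((n:ℝ) - 1))
          * (Y i ω - (∑ j, Y j ω) / n))^2
        = (((n:ℝ) - s) / ((n:ℝ) * ((n:ℝ) - 1)))^2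
          * ((∑ i, (Y i ω)^2) - (∑ i, Y i ω)^2 / n) := by
      simp only [mul_pow]
      rw [← Finset.mul_sum]
      congr 1
      rw [Finset.sum_congr rfl (fun i _ => show (Y i ω - (∑ j, Y j ω) / n)^2
        = (Y i ω)^2 - 2 * ((∑ j, Y j ω) / n) * Y i ω + ((∑ j, Y j ω) / n)^2 by ring)]
      rw [Finset.sum_add_distrib, Finset.sum_sub_distrib, ← Finset.mul_sum,
        Finset.sum_const, Finset.card_univ, Fintype.card_fin]
      field_simp
      have hnn : (n:ℝ) ^ 2 * ((n:ℝ)⁻¹) ^ 2 = 1 := by field_simp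
      linear_combination (∑ j, Y j ω) ^ 2 * hnn
    rw [expand]
    field_simp
  rw [hkey]
  -- integrability
  have hint1 : Integrable (fun ω => ∑ i, (Y i ω)^2) μ :=
    integrable_finset_sum _ (fun i _ => (hL2 i).integrable_sq)
  have hint2 : Integrable (fun ω => (∑ i, Y i ω)^2) μ := by
    have h := hsumL2.integrable_sq
    refine h.congr (Filter.Eventually.of_forall fun ω => ?_)
    simp [Finset.sum_apply]
  -- the integrals
  have hI1 : ∫ ω, ∑ i, (Y i ω)^2 ∂μ = (n:ℝ) * (V + m^2) := by
    rw [integral_finset_sum _ (fun i _ => (hL2 i).integrable_sq)]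
    have heach : ∀ i : Fin n, ∫ ω, (Y i ω)^2 ∂μ = ∫ ω, (Y z ω)^2 ∂μ := fun i =>
      ((hident i z).comp (measurable_id.pow_const 2)).integral_eq
    rw [Finset.sum_congr rfl (fun i _ => heach i), Finset.sum_const,
      Finset.card_univ, Fintype.card_fin]
    have hvz : V = (∫ ω, (Y z ω)^2 ∂μ) - m^2 := by
      rw [hV, variance_eq_sub (hL2 z)]
      simp only [Pi.pow_apply, hm]
    rw [hvz]
    simp only [nsmul_eq_mul]
    push_cast
    ring
  have hIsum : ∫ ω, ∑ i, Y i ω ∂μ = (n:ℝ) * m := by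
    rw [integral_finset_sum _ (fun i _ => (hL2 i).integrable one_le_two)]
    rw [Finset.sum_congr rfl (fun i _ => (hident i z).integral_eq), Finset.sum_const,
      Finset.card_univ, Fintype.card_fin]
    simp [nsmul_eq_mul, hm]
  have hI2 : ∫ ω, (∑ i, Y i ω)^2 ∂μ = (n:ℝ) * V + ((n:ℝ) * m)^2 := by
    have hvd := variance_eq_sub hsumL2
    have e1 : (μ[(∑ i, Y i) ^ 2] : ℝ) = ∫ ω, (∑ i, Y i ω)^2 ∂μ := by
      apply integral_congr_ae
      filter_upwards with ω
      simp [Finset.sum_apply]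
    have e2 : (μ[(∑ i, Y i)] : ℝ) = ∫ ω, ∑ i, Y i ω ∂μ := by
      apply integral_congr_ae
      filter_upwards with ω
      simp [Finset.sum_apply]
    rw [e1, e2, hIsum, hvarsum] at hvd
    linarith [hvd]
  -- put it together
  rw [show (fun ω => (1 / ((n:ℝ) * ((n:ℝ) - 1)))
      * ((∑ i, (Y i ω)^2) - (∑ i, Y i ω)^2 / n))
    = (fun ω => (1 / ((n:ℝ) * ((n:ℝ) - 1)))
      * ((fun ω => ∑ i, (Y i ω)^2) ω - (fun ω => (∑ i, Y i ω)^2) ω / n)) from rfl]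
  rw [integral_const_mul]
  rw [integral_sub hint1 (hint2.div_const _)]
  rw [integral_div, hI1, hI2]
  field_simp
  ring
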